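/- Let M be a Maya diagram and let k ≥ 1 be an integer. Then for every j ∈ {0, 1, …, k−1}, the set {m ∈ (M+k) ⊖ M : m ≡ j (mod k)} is finite of odd cardinality. That is, the k-th order flip set (M+k) ⊖ M of any Maya diagram is an oddly k-coloured set: each residue class mod k contains an odd number of its elements. -/

import Mathlib

open Classical in
/-- Telescoping sum over `Finset.Ioc` in ℤ. -/
lemma telescope_Ioc (g : ℤ → ZMod 2) (a : ℤ) : ∀ b, a ≤ b →
    ∑ m ∈ Finset.Ioc a b, (g m - g (m - 1)) = g b - g a := by
  refine fun b => Int.le_induction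
    (motive := fun b _ => ∑ m ∈ Finset.Ioc a b, (g m - g (m - 1)) = g b - g a) ?_ ?_ b
  · simp
  · intro b hb ih
    have h : Finset.Ioc a (b + 1) = insert (b + 1) (Finset.Ioc a b) := by
      ext x; simp only [Finset.mem_Ioc, Finset.mem_insert]; omega
    rw [h, Finset.sum_insert (by simp [Finset.mem_Ioc]), ih]
    ring

open Classical in
lemma flip_one (N : Set ℤ) (h1 : {n ∈ N | 0 ≤ n}.Finite)
    (h2 : {n : ℤ | n < 0 ∧ n ∉ N}.Finite) :
    {n : ℤ | Xor' ((n - 1) ∈ N) (n ∈ N)}.Finite ∧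
      Odd {n : ℤ | Xor' ((n - 1) ∈ N) (n ∈ N)}.ncard := by
  obtain ⟨b0, hb0⟩ := h1.bddAbove
  obtain ⟨a0, ha0⟩ := h2.bddBelow
  set a : ℤ := min a0 0 - 1 with ha
  set b : ℤ := max b0 0 + 1 with hb
  have hbN : ∀ m : ℤ, b ≤ m → m ∉ N := by
    intro m hm hmN
    have : m ≤ b0 := hb0 ⟨hmN, by omega⟩
    omega
  have haN : ∀ m : ℤ, m ≤ a → m ∈ N := by
    intro m hm
    by_contra h
    have : a0 ≤ m := ha0 ⟨by omega, h⟩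
    omega
  have hab : a ≤ b := by omega
  set T : Finset ℤ := (Finset.Ioc a b).filter (fun m => Xor' ((m - 1) ∈ N) (m ∈ N)) with hT
  have hset : {n : ℤ | Xor' ((n - 1) ∈ N) (n ∈ N)} = ↑T := by
    ext m
    simp only [hT, Finset.coe_filter, Set.mem_setOf_eq, Finset.mem_Ioc, iff_and_self]
    intro hx
    constructor
    · by_contra h
      push_neg at h
      have h1' : m ∈ N := haN m (by omega)
      have h2' : m - 1 ∈ N := haN (m - 1) (by omega)
      rcases hx with ⟨_, h⟩ | ⟨_, h⟩ <;> exact h (by assumption)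
    · by_contra h
      push_neg at h
      have h1' : m ∉ N := hbN m (by omega)
      have h2' : m - 1 ∉ N := hbN (m - 1) (by omega)
      rcases hx with ⟨h, _⟩ | ⟨h, _⟩ <;> exact (by assumption : ¬_) h
  rw [hset, Set.ncard_coe_finset]
  refine ⟨T.finite_toSet, ?_⟩
  -- parity via ZMod 2
  set g : ℤ → ZMod 2 := fun n => if n ∈ N then 1 else 0 with hg
  have hcast : (T.card : ZMod 2) = 1 := by
    have h1' : (T.card : ZMod 2)
        = ∑ m ∈ Finset.Ioc a b, (if Xor' ((m - 1) ∈ N) (m ∈ N) then (1 : ZMod 2) else 0) := by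
      rw [hT, Finset.card_filter]
      push_cast
      simp
    have h2' : ∀ m : ℤ, (if Xor' ((m - 1) ∈ N) (m ∈ N) then (1 : ZMod 2) else 0)
        = g m - g (m - 1) := by
      intro m
      by_cases hm : m ∈ N <;> by_cases hm1 : (m - 1) ∈ N <;>
        simp [hg, hm, hm1, Xor'] <;> decide
    rw [h1']
    simp_rw [h2']
    rw [telescope_Ioc g a b hab]
    have hga : g a = 1 := by simp [hg, haN a le_rfl]
    have hgb : g b = 0 := by simp [hg, hbN b le_rfl]
    rw [hga, hgb]; decide
  rcases Nat.even_or_odd T.card with he | ho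
  · exfalso
    obtain ⟨t, ht⟩ := he
    rw [ht] at hcast
    push_cast at hcast
    rw [CharTwo.add_self_eq_zero] at hcast
    exact absurd hcast (by decide)
  · exact ho

theorem maya_flip_set_oddly_coloured (M : Set ℤ)
    (h1 : {m ∈ M | 0 ≤ m}.Finite)
    (h2 : {m : ℤ | m < 0 ∧ m ∉ M}.Finite)
    (k : ℕ) (hk : 1 ≤ k) :
    ∀ j < k,
      {m ∈ symmDiff ((fun x => x + (k : ℤ)) '' M) M | m % (k : ℤ) = (j : ℤ)}.Finite ∧
      Odd {m ∈ symmDiff ((fun x => x + (k : ℤ)) '' M) M | m % (k : ℤ) = (j : ℤ)}.ncard := by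
  intro j hj
  have hk' : (0 : ℤ) < (k : ℤ) := by exact_mod_cast hk
  have hj' : (j : ℤ) < (k : ℤ) := by exact_mod_cast hj
  set e : ℤ → ℤ := fun n => (j : ℤ) + (k : ℤ) * n with he
  have hinj : Function.Injective e := by
    intro x y hxy
    simp only [he] at hxy
    have : (k : ℤ) * x = (k : ℤ) * y := by omega
    exact mul_left_cancel₀ (by omega) this
  set N : Set ℤ := {n : ℤ | e n ∈ M} with hN
  have hN1 : {n ∈ N | 0 ≤ n}.Finite := by
    apply Set.Finite.subset ((h1.preimage hinj.injOn))
    rintro n ⟨hn, hn0⟩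
    exact ⟨hn, by simp only [he]; positivity⟩
  have hN2 : {n : ℤ | n < 0 ∧ n ∉ N}.Finite := by
    apply Set.Finite.subset ((h2.preimage hinj.injOn))
    rintro n ⟨hn0, hn⟩
    refine ⟨?_, hn⟩
    simp only [he]
    nlinarith
  obtain ⟨hfin, hodd⟩ := flip_one N hN1 hN2
  have hsd : ∀ m : ℤ, m ∈ symmDiff ((fun x => x + (k : ℤ)) '' M) M ↔
      Xor' ((m - (k : ℤ)) ∈ M) (m ∈ M) := by
    intro m
    rw [Set.mem_symmDiff]
    have : m ∈ (fun x => x + (k : ℤ)) '' M ↔ (m - (k : ℤ)) ∈ M := by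
      constructor
      · rintro ⟨x, hx, rfl⟩; simpa using hx
      · intro h; exact ⟨m - k, h, by ring⟩
    rw [this]; rfl
  have hkey : {m ∈ symmDiff ((fun x => x + (k : ℤ)) '' M) M | m % (k : ℤ) = (j : ℤ)}
      = e '' {n : ℤ | Xor' ((n - 1) ∈ N) (n ∈ N)} := by
    ext m
    simp only [Set.mem_setOf_eq, Set.mem_image]
    constructor
    · rintro ⟨hm, hmod⟩
      refine ⟨(m - j) / k, ?_, ?_⟩
      · have hdvd : (k : ℤ) ∣ (m - j) := by
          apply Int.dvd_of_emod_eq_zero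
          rw [Int.sub_emod, hmod, Int.emod_eq_of_lt (by positivity) hj']
          simp
        have hm' : e ((m - j) / k) = m := by
          simp only [he]
          rw [Int.mul_ediv_cancel' hdvd]; ring
        have hm1' : e ((m - j) / k - 1) = m - k := by
          simp only [he]
          rw [mul_sub, Int.mul_ediv_cancel' hdvd]; ring
        rw [hsd] at hm
        simp only [hN, Set.mem_setOf_eq]
        rw [show (m - j) / k - 1 = ((m - j) / k) - 1 from rfl, hm1', hm']
        exact hm
      · have hdvd : (k : ℤ) ∣ (m - j) := by
          apply Int.dvd_of_emod_eq_zero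
          rw [Int.sub_emod, hmod, Int.emod_eq_of_lt (by positivity) hj']
          simp
        simp only [he]
        rw [Int.mul_ediv_cancel' hdvd]; ring
    · rintro ⟨n, hn, rfl⟩
      simp only [hN, Set.mem_setOf_eq] at hn
      constructor
      · rw [hsd]
        have h1' : e n - k = e (n - 1) := by simp only [he]; ring
        rw [h1']
        exact hn
      · simp only [he]
        rw [Int.add_mul_emod_self_left]
        exact Int.emod_eq_of_lt (by positivity) hj'
  rw [hkey]
  exact ⟨hfin.image e, by rw [Set.ncard_image_of_injective _ hinj]; exact hodd⟩
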